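/- Let p be a prime and let k be an algebraically closed field of characteristic p. Then there is a set D ⊆ k(z) that is Diophantine over k(z), such that k(z) − D is infinite and, for every n ≥ 1, D contains a nonempty Zariski open subset of k[z]_n = k^{n+1} (the polynomials of degree at most n, identified with k^{n+1} via coefficients). In fact, D = k(z) − k(z^p), the complement of the subfield of rational functions in z^p, has these properties. -/

import Mathlib

/-- A set `X ⊆ R^n` is *Diophantine* over `R` if there are finitely many polynomials
`F₁, …, F_r ∈ R[x₁,…,x_n,y₁,…,y_m]` such that `X` is the set of `a ∈ R^n` for which the
system `F_j(a, b) = 0` (for all `j`) has a solution `b ∈ R^m`. -/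
def IsDiophantine {R : Type*} [CommRing R] {n : ℕ} (X : Set (Fin n → R)) : Prop :=
  ∃ (m r : ℕ) (F : Fin r → MvPolynomial (Fin n ⊕ Fin m) R),
    ∀ a : Fin n → R, a ∈ X ↔
      ∃ b : Fin m → R, ∀ j : Fin r, MvPolynomial.eval (Sum.elim a b) (F j) = 0

/-- A set `X ⊆ R` is Diophantine over `R` (one-variable case of `IsDiophantine`). -/
def IsDiophantine1 {R : Type*} [CommRing R] (X : Set R) : Prop :=
  ∃ (m r : ℕ) (F : Fin r → MvPolynomial (Fin 1 ⊕ Fin m) R),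
    ∀ a : R, a ∈ X ↔
      ∃ b : Fin m → R, ∀ j : Fin r, MvPolynomial.eval (Sum.elim (fun _ => a) b) (F j) = 0

/-- A set `X ⊆ R²` is Diophantine over `R` (two-variable case of `IsDiophantine`). -/
def IsDiophantine2 {R : Type*} [CommRing R] (X : Set (R × R)) : Prop :=
  ∃ (m r : ℕ) (F : Fin r → MvPolynomial (Fin 2 ⊕ Fin m) R),
    ∀ a : R × R, a ∈ X ↔
      ∃ b : Fin m → R, ∀ j : Fin r, MvPolynomial.eval (Sum.elim ![a.1, a.2] b) (F j) = 0

/-- `D ⊆ k(z)` contains a nonempty Zariski open subset of `k[z]_n = k^{n+1}` (the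
polynomials of degree at most `n`, identified with `k^{n+1}` via coefficients): there are
finitely many polynomials `G₁,…,G_r` in `n+1` variables whose common zero set has nonempty
complement `U`, and every polynomial of degree at most `n` whose coefficient vector lies in
`U` belongs to `D`. -/
def ContainsZariskiOpen {k : Type*} [Field k] (D : Set (RatFunc k)) (n : ℕ) : Prop :=
  ∃ (r : ℕ) (G : Fin r → MvPolynomial (Fin (n + 1)) k),
    (∃ c : Fin (n + 1) → k, ∃ j : Fin r, MvPolynomial.eval c (G j) ≠ 0) ∧
    ∀ c : Fin (n + 1) → k, (∃ j : Fin r, MvPolynomial.eval c (G j) ≠ 0) →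
      algebraMap (Polynomial k) (RatFunc k)
        (∑ i : Fin (n + 1), Polynomial.C (c i) * Polynomial.X ^ (i : ℕ)) ∈ D

/-- **Kollár's conjecture**: every Diophantine set `D ⊆ ℂ(z)` which, for infinitely many
`n ≥ 0`, contains a nonempty Zariski open subset of `ℂ[z]_n = ℂ^{n+1}`, has finite
complement. -/
def KollarConjecture : Prop :=
  ∀ D : Set (RatFunc ℂ), IsDiophantine1 D →
    {n : ℕ | ContainsZariskiOpen D n}.Infinite → Dᶜ.Finite

set_option synthInstance.maxHeartbeats 1000000
set_option maxHeartbeats 2000000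

open Polynomial

section KollarHelpers

instance ratfunc_charP (p : ℕ) (k : Type*) [Field k] [CharP k p] : CharP (RatFunc k) p :=
  charP_of_injective_algebraMap (algebraMap k (RatFunc k)).injective p

variable {p : ℕ} {k : Type*} [Field k]

private lemma X_not_pow (hp : p.Prime) (e : RatFunc k) : e ^ p ≠ RatFunc.X := by
  intro h
  have he : e ≠ 0 := by
    rintro rfl
    rw [zero_pow hp.ne_zero] at h
    exact RatFunc.X_ne_zero h.symm
  have hd : ∀ n : ℕ, (e ^ n).intDegree = n * e.intDegree := by
    intro n
    induction n with
    | zero => simp [RatFunc.intDegree_one]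
    | succ m ih =>
      rw [pow_succ, RatFunc.intDegree_mul (pow_ne_zero _ he) he, ih]
      push_cast; ring
  have h1 : (1 : ℤ) = p * e.intDegree := by
    rw [← RatFunc.intDegree_X (K := k), ← h, hd]
  have h2 : (p : ℤ) ∣ 1 := Dvd.intro _ h1.symm
  have := Int.le_of_dvd one_pos h2
  have := hp.two_le
  omega

private lemma poly_span [IsAlgClosed k] [CharP k p] (hp : p.Prime) (g : k[X]) :
    ∃ c : Fin p → k[X], g = ∑ i : Fin p, c i ^ p * X ^ (i : ℕ) := by
  haveI : Fact p.Prime := ⟨hp⟩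
  induction g using Polynomial.induction_on' with
  | add f g hf hg =>
    obtain ⟨c, hc⟩ := hf
    obtain ⟨d, hd⟩ := hg
    refine ⟨c + d, ?_⟩
    rw [hc, hd, ← Finset.sum_add_distrib]
    refine Finset.sum_congr rfl fun i _ => ?_
    rw [Pi.add_apply, add_pow_char, add_mul]
  | monomial n a =>
    obtain ⟨b, hb⟩ := IsAlgClosed.exists_pow_nat_eq a hp.pos
    have hr : n % p < p := Nat.mod_lt _ hp.pos
    refine ⟨fun i => if i = ⟨n % p, hr⟩ then C b * X ^ (n / p) else 0, ?_⟩
    rw [Finset.sum_eq_single (⟨n % p, hr⟩ : Fin p)]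
    · rw [show (fun i => if i = (⟨n % p, hr⟩ : Fin p) then C b * X ^ (n / p) else 0)
            ⟨n % p, hr⟩ = C b * X ^ (n / p) from if_pos rfl,
        mul_pow, ← C_pow, hb, ← pow_mul]
      rw [mul_assoc, ← pow_add]
      have : n / p * p + (⟨n % p, hr⟩ : Fin p).val = n := by
        simpa using Nat.div_add_mod' n p
      rw [this, C_mul_X_pow_eq_monomial]
    · intro i _ hi
      rw [show (fun i => if i = (⟨n % p, hr⟩ : Fin p) then C b * X ^ (n / p) else 0)
            i = 0 from if_neg hi, zero_pow hp.ne_zero, zero_mul]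
    · intro h; exact absurd (Finset.mem_univ _) h

private lemma poly_indep (hp : p.Prime) (g : Fin p → k[X])
    (h : ∑ i : Fin p, g i ^ p * X ^ (i : ℕ) = 0) : ∀ i, g i = 0 := by
  classical
  by_contra hc
  push_neg at hc
  obtain ⟨i1, hi1⟩ := hc
  set s : Finset (Fin p) := Finset.univ.filter (fun i => g i ≠ 0) with hs
  have hne : s.Nonempty := ⟨i1, by simp [hs, hi1]⟩
  set f : Fin p → ℕ := fun i => p * (g i).natDegree + (i : ℕ) with hf
  obtain ⟨i0, hi0s, hi0⟩ := Finset.exists_mem_eq_sup s hne f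
  set N := s.sup f with hN
  have hgi0 : g i0 ≠ 0 := (Finset.mem_filter.mp hi0s).2
  have hdeg : ∀ i, g i ≠ 0 → (g i ^ p * X ^ (i : ℕ)).natDegree = f i := by
    intro i hi
    rw [natDegree_mul (pow_ne_zero _ hi) (pow_ne_zero _ X_ne_zero),
      natDegree_pow, natDegree_X_pow]
  have hcoeff := congrArg (fun q => Polynomial.coeff q N) h
  simp only [finset_sum_coeff, coeff_zero] at hcoeff
  rw [Finset.sum_eq_single i0] at hcoeff
  · rw [hi0, ← hdeg i0 hgi0, coeff_natDegree, leadingCoeff_mul, leadingCoeff_pow,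
      leadingCoeff_X_pow, mul_one] at hcoeff
    exact pow_ne_zero _ (leadingCoeff_ne_zero.mpr hgi0) hcoeff
  · intro i _ hii0
    by_cases hgi : g i = 0
    · simp [hgi, zero_pow hp.ne_zero]
    · apply coeff_eq_zero_of_natDegree_lt
      rw [hdeg i hgi]
      have hle : f i ≤ N := Finset.le_sup (Finset.mem_filter.mpr ⟨Finset.mem_univ _, hgi⟩)
      rcases lt_or_eq_of_le hle with h' | h'
      · exact h'
      · exfalso
        apply hii0
        have heq : f i = f i0 := h'.trans hi0
        simp only [hf] at heq
        have h1 : (i : ℕ) % p = (i0 : ℕ) % p := by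
          rw [← Nat.mul_add_mod p _ (i : ℕ), ← Nat.mul_add_mod p _ (i0 : ℕ), heq]
        rwa [Nat.mod_eq_of_lt i.isLt, Nat.mod_eq_of_lt i0.isLt, ← Fin.ext_iff] at h1
  · intro h'; exact absurd (Finset.mem_univ _) h'

private lemma ratfunc_span [IsAlgClosed k] [CharP k p] (hp : p.Prime) (f : RatFunc k) :
    ∃ c : Fin p → RatFunc k, f = ∑ i : Fin p, c i ^ p * RatFunc.X ^ (i : ℕ) := by
  obtain ⟨c, hc⟩ := poly_span hp (f.num * f.denom ^ (p - 1))
  set A := algebraMap k[X] (RatFunc k)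
  have hd : A f.denom ≠ 0 := RatFunc.algebraMap_ne_zero f.denom_ne_zero
  refine ⟨fun i => A (c i) / A f.denom, ?_⟩
  have key : ∑ i : Fin p, (A (c i) / A f.denom) ^ p * RatFunc.X ^ (i : ℕ)
      = A (f.num * f.denom ^ (p - 1)) / A f.denom ^ p := by
    rw [hc, map_sum, Finset.sum_div]
    refine Finset.sum_congr rfl fun i _ => ?_
    rw [div_pow, map_mul, map_pow, map_pow, RatFunc.algebraMap_X, div_mul_eq_mul_div]
  rw [key, map_mul, map_pow, eq_div_iff (pow_ne_zero _ hd)]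
  have hp1 : p = (p - 1) + 1 := (Nat.succ_pred_eq_of_pos hp.pos).symm
  have hfd : f * A f.denom = A f.num := (eq_div_iff hd).mp f.num_div_denom.symm
  calc f * A f.denom ^ p = (f * A f.denom) * A f.denom ^ (p - 1) := by
        conv_lhs => rw [hp1]
        rw [pow_succ]; ring
    _ = A f.num * A f.denom ^ (p - 1) := by rw [hfd]

private lemma ratfunc_indep (hp : p.Prime) (c : Fin p → RatFunc k)
    (h : ∑ i : Fin p, c i ^ p * RatFunc.X ^ (i : ℕ) = 0) : ∀ i, c i = 0 := by
  classical
  set A := algebraMap k[X] (RatFunc k)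
  set d : k[X] := ∏ j : Fin p, (c j).denom with hd
  have hkey : ∀ i, c i * A d = A ((c i).num * ∏ j ∈ Finset.univ.erase i, (c j).denom) := by
    intro i
    rw [hd, map_prod, ← Finset.mul_prod_erase Finset.univ _ (Finset.mem_univ i), map_mul,
      ← mul_assoc]
    congr 1
    · exact (eq_div_iff (RatFunc.algebraMap_ne_zero (c i).denom_ne_zero)).mp
        (c i).num_div_denom.symm
    · exact (map_prod A _ _).symm
  set e : Fin p → k[X] := fun i => (c i).num * ∏ j ∈ Finset.univ.erase i, (c j).denom with he
  have h2 : ∑ i : Fin p, e i ^ p * X ^ (i : ℕ) = 0 := by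
    apply RatFunc.algebraMap_injective k
    rw [map_sum, map_zero]
    have : ∀ i : Fin p, A (e i ^ p * X ^ (i:ℕ)) = (c i ^ p * RatFunc.X ^ (i:ℕ)) * A d ^ p := by
      intro i
      rw [map_mul, map_pow, map_pow, RatFunc.algebraMap_X, he, ← hkey, mul_pow]
      ring
    rw [Finset.sum_congr rfl fun i _ => this i, ← Finset.sum_mul, h, zero_mul]
  intro i
  have := poly_indep hp e h2 i
  rw [he] at this
  simp only [mul_eq_zero] at this
  rcases this with h3 | h3
  · exact RatFunc.num_eq_zero_iff.mp h3
  · exact absurd h3 (Finset.prod_ne_zero_iff.mpr fun j _ => (c j).denom_ne_zero)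

end KollarHelpers

section KollarMain

variable (p : ℕ) [Fact p.Prime] (k : Type*) [Field k] [IsAlgClosed k] [CharP k p]

/-- The subfield of `p`-th powers of `k(z)`, i.e. the image of the Frobenius. -/
noncomputable def Fsub : Subfield (RatFunc k) := (frobenius (RatFunc k) p).fieldRange

private lemma mem_Fsub_iff (f : RatFunc k) :
    f ∈ Fsub p k ↔ ∃ e : RatFunc k, e ^ p = f := by
  simp [Fsub, RingHom.mem_fieldRange, frobenius_def]

private lemma closure_eq_Fsub :
    Subfield.closure (Set.range (algebraMap k (RatFunc k)) ∪ {RatFunc.X ^ p})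
      = Fsub p k := by
  have hp : p.Prime := Fact.out
  apply le_antisymm
  · rw [Subfield.closure_le]
    rintro x (⟨a, rfl⟩ | rfl)
    · obtain ⟨b, hb⟩ := IsAlgClosed.exists_pow_nat_eq a hp.pos
      exact ⟨algebraMap k (RatFunc k) b, by rw [frobenius_def, ← map_pow, hb]⟩
    · exact ⟨RatFunc.X, frobenius_def ..⟩
  · rintro f ⟨e, rfl⟩
    rw [frobenius_def]
    set S := Subfield.closure (Set.range (algebraMap k (RatFunc k)) ∪ {RatFunc.X ^ p})
    have hXp : (RatFunc.X : RatFunc k) ^ p ∈ S := Subfield.subset_closure (Or.inr rfl)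
    have hC : ∀ a : k, algebraMap k (RatFunc k) a ∈ S :=
      fun a => Subfield.subset_closure (Or.inl ⟨a, rfl⟩)
    have key : ∀ g : k[X], (algebraMap k[X] (RatFunc k) g) ^ p ∈ S := by
      intro g
      induction g using Polynomial.induction_on' with
      | add f g hf hg => rw [map_add, add_pow_char]; exact Subfield.add_mem _ hf hg
      | monomial n a =>
        rw [← C_mul_X_pow_eq_monomial, map_mul, map_pow, RatFunc.algebraMap_X,
          RatFunc.algebraMap_C, mul_pow, ← pow_mul, mul_comm n p, pow_mul]
        refine Subfield.mul_mem _ ?_ (Subfield.pow_mem _ hXp n)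
        rw [← map_pow, ← RatFunc.algebraMap_eq_C]
        exact hC (a ^ p)
    rw [← e.num_div_denom, div_pow]
    exact Subfield.div_mem _ (key e.num) (key e.denom)

private noncomputable def XBasis : Module.Basis (Fin p) (Fsub p k) (RatFunc k) := by
  have hp : p.Prime := Fact.out
  refine Module.Basis.mk (v := fun i : Fin p => RatFunc.X ^ (i : ℕ)) ?_ ?_
  · rw [Fintype.linearIndependent_iff]
    intro g hg i
    have hmem : ∀ j : Fin p, ∃ e : RatFunc k, e ^ p = (g j : RatFunc k) := fun j => by
      obtain ⟨e, he⟩ := (g j).2; exact ⟨e, by rw [← he, frobenius_def]⟩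
    choose e he using hmem
    have h0 : ∑ j : Fin p, e j ^ p * RatFunc.X ^ (j : ℕ) = 0 := by
      rw [← hg]
      exact Finset.sum_congr rfl fun j _ => by rw [he j]; rfl
    have := ratfunc_indep hp e h0 i
    have : (g i : RatFunc k) = 0 := by rw [← he i, this, zero_pow hp.ne_zero]
    exact Subtype.ext this
  · rintro f -
    obtain ⟨c, hc⟩ := ratfunc_span hp f
    rw [hc]
    refine Submodule.sum_mem _ fun i _ => ?_
    have : c i ^ p * RatFunc.X ^ (i : ℕ)
        = (⟨c i ^ p, ⟨c i, frobenius_def ..⟩⟩ : Fsub p k) • (RatFunc.X ^ (i : ℕ) : RatFunc k) := by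
      rw [Algebra.smul_def]; rfl
    rw [this]
    exact Submodule.smul_mem _ _ (Submodule.subset_span ⟨i, rfl⟩)

private instance fsub_fd : FiniteDimensional (Fsub p k) (RatFunc k) :=
  Module.Basis.finiteDimensional_of_finite (XBasis p k)

private lemma fsub_finrank : Module.finrank (Fsub p k) (RatFunc k) = p := by
  rw [Module.finrank_eq_card_basis (XBasis p k), Fintype.card_fin]

private lemma main_dir (a : RatFunc k) (ha : a ∉ Fsub p k) :
    ∃ b : Fin p → RatFunc k, ∑ i : Fin p, b i ^ p * a ^ (i : ℕ) = RatFunc.X := by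
  classical
  have hp : p.Prime := Fact.out
  set F := Fsub p k with hF
  have hapF : a ^ p ∈ F := ⟨a, frobenius_def ..⟩
  have halg : ∀ c : F, algebraMap F (RatFunc k) c = (c : (RatFunc k)) := fun c => rfl
  have hint : IsIntegral F a := by
    refine ⟨X ^ p - C (⟨a ^ p, hapF⟩ : F), monic_X_pow_sub_C _ hp.ne_zero, ?_⟩
    simp only [eval₂_sub, eval₂_pow, eval₂_X, eval₂_C, halg]
    exact sub_self _
  set E := IntermediateField.adjoin F {a} with hE
  have haE : a ∈ E := IntermediateField.mem_adjoin_simple_self F a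
  have hdvd : Module.finrank F E ∣ p := by
    refine ⟨Module.finrank E (RatFunc k), ?_⟩
    rw [← fsub_finrank p k, Module.finrank_mul_finrank]
  have hne1 : Module.finrank F E ≠ 1 := by
    intro h1
    rw [IntermediateField.finrank_eq_one_iff] at h1
    rw [h1, IntermediateField.mem_bot] at haE
    obtain ⟨x, hx⟩ := haE
    exact ha (by rw [← hx]; exact x.2)
  have hfr : Module.finrank F E = p := (hp.eq_one_or_self_of_dvd _ hdvd).resolve_left hne1
  haveI : FiniteDimensional F (⊤ : IntermediateField F (RatFunc k)) :=
    (IntermediateField.topEquiv (F := F) (E := (RatFunc k))).symm.toLinearEquiv.finiteDimensional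
  have hEtop : E = ⊤ := by
    refine IntermediateField.eq_of_le_of_finrank_le le_top ?_
    rw [IntermediateField.finrank_top', fsub_finrank p k, hfr]
  have hXE : RatFunc.X ∈ E := by rw [hEtop]; exact IntermediateField.mem_top
  have hXadj : RatFunc.X ∈ Algebra.adjoin F ({a} : Set (RatFunc k)) := by
    rw [← IntermediateField.adjoin_simple_toSubalgebra_of_isAlgebraic hint.isAlgebraic]
    exact hXE
  rw [Algebra.adjoin_singleton_eq_range_aeval, AlgHom.mem_range] at hXadj
  obtain ⟨g, hg⟩ := hXadj
  rw [aeval_eq_sum_range] at hg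
  have hmem : ∀ i : ℕ, ∃ e : (RatFunc k), e ^ p = ((g.coeff i : (RatFunc k))) := fun i => by
    obtain ⟨e, he⟩ := (g.coeff i).2; exact ⟨e, by rw [← he, frobenius_def]⟩
  choose u hu using hmem
  set N := g.natDegree + 1
  have hfrob : ∀ (s : Finset ℕ) (f : ℕ → RatFunc k),
      (∑ i ∈ s, f i) ^ p = ∑ i ∈ s, f i ^ p := fun s f => by
    simpa only [frobenius_def] using map_sum (frobenius (RatFunc k) p) f s
  refine ⟨fun r => ∑ i ∈ (Finset.range N).filter
      (fun i => (⟨i % p, Nat.mod_lt _ hp.pos⟩ : Fin p) = r), (u i * a ^ (i / p)), ?_⟩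
  calc ∑ r : Fin p, (∑ i ∈ (Finset.range N).filter
          (fun i => (⟨i % p, Nat.mod_lt _ hp.pos⟩ : Fin p) = r), u i * a ^ (i / p)) ^ p
          * a ^ (r : ℕ)
      = ∑ r : Fin p, ∑ i ∈ (Finset.range N).filter
          (fun i => (⟨i % p, Nat.mod_lt _ hp.pos⟩ : Fin p) = r), u i ^ p * a ^ i := by
        refine Finset.sum_congr rfl fun r _ => ?_
        rw [hfrob, Finset.sum_mul]
        refine Finset.sum_congr rfl fun i hi => ?_
        have hir : i % p = (r : ℕ) := congrArg Fin.val (Finset.mem_filter.mp hi).2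
        have hdm : i / p * p + i % p = i := Nat.div_add_mod' i p
        rw [mul_pow, ← pow_mul, mul_assoc, ← pow_add]
        congr 2
        omega
    _ = ∑ i ∈ Finset.range N, u i ^ p * a ^ i := Finset.sum_fiberwise _ _ _
    _ = RatFunc.X := by
        rw [← hg]
        refine Finset.sum_congr rfl fun i _ => ?_
        rw [Algebra.smul_def, halg, ← hu i]

private lemma conv_dir (a : RatFunc k) (ha : a ∈ Fsub p k) (b : Fin p → RatFunc k) :
    ∑ i : Fin p, b i ^ p * a ^ (i : ℕ) ≠ RatFunc.X := by
  have hp : p.Prime := Fact.out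
  obtain ⟨e, he⟩ := (mem_Fsub_iff p k a).mp ha
  intro h
  apply X_not_pow hp (∑ i : Fin p, b i * e ^ (i : ℕ))
  rw [show (∑ i : Fin p, b i * e ^ (i : ℕ)) ^ p = ∑ i : Fin p, (b i * e ^ (i : ℕ)) ^ p by
    simpa only [frobenius_def] using map_sum (frobenius (RatFunc k) p) _ Finset.univ]
  rw [← h]
  refine Finset.sum_congr rfl fun i _ => ?_
  rw [mul_pow, ← pow_mul, mul_comm (i : ℕ) p, pow_mul, he]

end KollarMain


/-- Let `p` be a prime and `k` an algebraically closed field of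
characteristic `p`. Then `D = k(z) − k(z^p)`, the complement of the subfield generated by
`k` and `z^p`, is Diophantine over `k(z)`, has infinite complement, and contains a nonempty
Zariski open subset of `k[z]_n = k^{n+1}` for every `n ≥ 1`. In particular the analogue of
Kollár's conjecture fails in characteristic `p`. -/
theorem kollar_conjecture_fails_in_positive_characteristic
    (p : ℕ) (hp : p.Prime) (k : Type*) [Field k] [IsAlgClosed k] [CharP k p] :
    ∃ D : Set (RatFunc k),
      D = {f : RatFunc k |
        f ∉ Subfield.closure (Set.range (algebraMap k (RatFunc k)) ∪ {RatFunc.X ^ p})} ∧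
      IsDiophantine1 D ∧ Dᶜ.Infinite ∧
      ∀ n : ℕ, 1 ≤ n → ContainsZariskiOpen D n := by
  haveI : Fact p.Prime := ⟨hp⟩
  set S := Subfield.closure (Set.range (algebraMap k (RatFunc k)) ∪ {RatFunc.X ^ p}) with hS
  refine ⟨{f | f ∉ S}, rfl, ?_, ?_, ?_⟩
  · -- Diophantine
    refine ⟨p, 1, fun _ => (∑ i : Fin p, (MvPolynomial.X (Sum.inr i)) ^ p *
        (MvPolynomial.X (Sum.inl 0)) ^ (i : ℕ)) - MvPolynomial.C RatFunc.X, fun a => ?_⟩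
    have heval : ∀ b : Fin p → RatFunc k,
        MvPolynomial.eval (Sum.elim (fun _ : Fin 1 => a) b)
          ((∑ i : Fin p, (MvPolynomial.X (Sum.inr i)) ^ p *
            (MvPolynomial.X (Sum.inl (0 : Fin 1))) ^ (i : ℕ)) - MvPolynomial.C RatFunc.X)
        = (∑ i : Fin p, b i ^ p * a ^ (i : ℕ)) - RatFunc.X := by
      intro b
      simp [map_sub, map_sum, map_pow, map_mul]
    constructor
    · intro haD
      have haF : a ∉ Fsub p k := by
        rw [← closure_eq_Fsub p k, ← hS]
        exact haD
      obtain ⟨b, hb⟩ := main_dir p k a haF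
      exact ⟨b, fun j => (heval b).trans (by rw [hb]; exact sub_self _)⟩
    · rintro ⟨b, hb⟩
      have h0 : (∑ i : Fin p, b i ^ p * a ^ (i : ℕ)) - RatFunc.X = 0 :=
        (heval b).symm.trans (hb 0)
      rw [sub_eq_zero] at h0
      intro haS
      refine conv_dir p k a ?_ b h0
      rw [← closure_eq_Fsub p k, ← hS]
      exact haS
  · -- complement infinite
    have hc : {f : RatFunc k | f ∉ S}ᶜ = (S : Set (RatFunc k)) := by
      ext f; simp
    rw [hc]
    exact Set.infinite_of_injective_forall_mem
      (f := fun a : k => algebraMap k (RatFunc k) a)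
      (algebraMap k (RatFunc k)).injective
      (fun a => Subfield.subset_closure (Or.inl ⟨a, rfl⟩))
  · -- Zariski open
    intro n hn
    have h1n : (1 : ℕ) < n + 1 := by omega
    refine ⟨1, fun _ => MvPolynomial.X ⟨1, h1n⟩, ⟨fun _ => 1, 0, by simp⟩, ?_⟩
    rintro c ⟨j, hj⟩
    rw [MvPolynomial.eval_X] at hj
    set g : Polynomial k := ∑ i : Fin (n+1), Polynomial.C (c i) * Polynomial.X ^ (i:ℕ) with hg
    intro hmem
    rw [hS, closure_eq_Fsub, mem_Fsub_iff] at hmem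
    obtain ⟨e, he⟩ := hmem
    have hint : IsIntegral (Polynomial k) e := by
      refine ⟨X ^ p - C g, monic_X_pow_sub_C _ hp.ne_zero, ?_⟩
      simp only [eval₂_sub, eval₂_pow, eval₂_X, eval₂_C]
      rw [he]
      exact sub_self _
    obtain ⟨h, hh⟩ := IsIntegrallyClosed.isIntegral_iff.mp hint
    have hpg : h ^ p = g := by
      apply RatFunc.algebraMap_injective k
      rw [map_pow, hh, he]
    have h1 : g.coeff 1 = c ⟨1, h1n⟩ := by
      rw [hg, finset_sum_coeff]
      rw [Finset.sum_eq_single (⟨1, h1n⟩ : Fin (n+1))]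
      · simp [coeff_C_mul, coeff_X_pow]
      · intro i _ hi
        have hne : (1 : ℕ) ≠ (i : ℕ) := fun h => hi (Fin.ext h.symm)
        simp [coeff_C_mul, coeff_X_pow, hne]
      · intro h'; exact absurd (Finset.mem_univ _) h'
    have hnd : ¬ (p ∣ 1) := by simpa [Nat.dvd_one] using hp.ne_one
    have h2 : (h ^ p).coeff 1 = 0 := by
      rw [← Polynomial.map_frobenius_expand (p := p) h, Polynomial.coeff_map, Polynomial.coeff_expand hp.pos,
        if_neg hnd, map_zero]
    rw [hpg, h1] at h2
    exact hj h2
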